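/- Let (Γ, A) be a decorated graph such that Γ is a finite tree admitting a root vertex v₀ with the following property: whenever v is the parent of a vertex w via an edge e, the half-edge map A_w → A_e attached to w is an isomorphism. Then (Γ, A) can be contracted to a point, i.e., there is a finite sequence of contractions of decorated graphs along redundant half-edges taking (Γ, A) to a decorated graph with a single vertex and no edges. -/

import Mathlib

/-- A coefficient system on a finite directed multigraph with vertex type `V`,
edge type `E`, tail map `tl` and head map `hd`. -/
structure CoeffSys {V E : Type} (tl hd : E → V) where
  vert : V → Type
  edge : E → Type
  [vertGrp : ∀ v, AddCommGroup (vert v)]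
  [edgeGrp : ∀ e, AddCommGroup (edge e)]
  mapT : ∀ e, vert (tl e) →+ edge e
  mapH : ∀ e, vert (hd e) →+ edge e

attribute [instance] CoeffSys.vertGrp CoeffSys.edgeGrp

namespace CoeffSys

variable {V E : Type} {tl hd : E → V}

/-- The differential of the two-term cochain complex associated to a coefficient system. -/
def d (A : CoeffSys tl hd) : ((v : V) → A.vert v) →+ ((e : E) → A.edge e) where
  toFun a := fun e => A.mapT e (a (tl e)) + A.mapH e (a (hd e))
  map_zero' := by funext e; simp
  map_add' x y := by funext e; simp only [Pi.add_apply, map_add]; abel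

/-- `H⁰(Γ, A)` is the kernel of the differential. -/
abbrev H0 (A : CoeffSys tl hd) : AddSubgroup ((v : V) → A.vert v) := A.d.ker

/-- `H¹(Γ, A)` is the cokernel of the differential. -/
abbrev H1 (A : CoeffSys tl hd) : Type := ((e : E) → A.edge e) ⧸ A.d.range

end CoeffSys

namespace CoeffSys

variable {V E : Type} {tl hd : E → V}

/-- Transport of vertex groups along an equality of vertices. -/
def vcast (A : CoeffSys tl hd) {u v : V} (huv : u = v) : A.vert u ≃+ A.vert v := by
  subst huv; exact AddEquiv.refl _

/-- The inverse of the (bijective) tail half-edge map at `e₀`, as a homomorphism. -/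
noncomputable def invT (A : CoeffSys tl hd) (e₀ : E)
    (hbij : Function.Bijective (A.mapT e₀)) : A.edge e₀ →+ A.vert (tl e₀) :=
  (AddEquiv.ofBijective (A.mapT e₀) hbij).symm.toAddMonoidHom

variable [DecidableEq V] [DecidableEq E]

/-- The map sending a vertex of `Γ` to the corresponding vertex of the contracted graph
`Γ/e₀`, where `x = tl e₀` is identified with `y = hd e₀` (the vertex `[xy]` is represented
by `hd e₀`). -/
def πV (tl hd : E → V) (e₀ : E) (hne : tl e₀ ≠ hd e₀) (v : V) : {v : V // v ≠ tl e₀} :=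
  ⟨if v = tl e₀ then hd e₀ else v, by
    split
    · exact fun hc => hne hc.symm
    · assumption⟩

/-- The half-edge maps of the contracted coefficient system `A/α`: an old half-edge map
`m : A_v →+ A_f` is unchanged if `v ≠ tl e₀`, and if `v = tl e₀` it becomes the composite
`A_y → A_{e₀} → A_x → A_f` where the middle map is `-(A.mapT e₀)⁻¹`. -/
noncomputable def contrHalf (A : CoeffSys tl hd) (e₀ : E)
    (hbij : Function.Bijective (A.mapT e₀)) {f : E} (v : V) (m : A.vert v →+ A.edge f) :
    A.vert (if v = tl e₀ then hd e₀ else v) →+ A.edge f :=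
  if hv : v = tl e₀ then
    m.comp ((A.vcast hv.symm).toAddMonoidHom.comp
      ((-(A.invT e₀ hbij)).comp
        ((A.mapH e₀).comp (A.vcast (if_pos hv)).toAddMonoidHom)))
  else m.comp (A.vcast (if_neg hv)).toAddMonoidHom

/-- The contraction `A/α` of the coefficient system `A` along the redundant tail
half-edge of `e₀`. -/
noncomputable def contrSys (A : CoeffSys tl hd) (e₀ : E) (hne : tl e₀ ≠ hd e₀)
    (hbij : Function.Bijective (A.mapT e₀)) :
    CoeffSys (fun e' : {e : E // e ≠ e₀} => πV tl hd e₀ hne (tl e'.1))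
      (fun e' : {e : E // e ≠ e₀} => πV tl hd e₀ hne (hd e'.1)) where
  vert v' := A.vert v'.1
  edge e' := A.edge e'.1
  mapT e' := A.contrHalf e₀ hbij (tl e'.1) (A.mapT e'.1)
  mapH e' := A.contrHalf e₀ hbij (hd e'.1) (A.mapH e'.1)

/-- The degree-0 part of the comparison map `π : C(Γ/e₀, A/α) → C(Γ, A)`:
`a ↦ (−A_{e₀,t}^{−1}(A_{e₀,h}(a_{[xy]})), a)`. -/
noncomputable def π0 (A : CoeffSys tl hd) (e₀ : E) (hne : tl e₀ ≠ hd e₀)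
    (hbij : Function.Bijective (A.mapT e₀)) :
    ((v' : {v : V // v ≠ tl e₀}) → A.vert v'.1) →+ ((v : V) → A.vert v) where
  toFun a := fun v =>
    if hv : v = tl e₀ then
      A.vcast hv.symm (-(A.invT e₀ hbij (A.mapH e₀ (a ⟨hd e₀, fun hc => hne hc.symm⟩))))
    else a ⟨v, hv⟩
  map_zero' := by
    funext v
    by_cases hv : v = tl e₀ <;> simp [hv]
  map_add' x y := by
    funext v
    by_cases hv : v = tl e₀ <;> simp [hv, neg_add] <;> abel

/-- The degree-1 part of the comparison map `π : C(Γ/e₀, A/α) → C(Γ, A)`: the canonical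
identification on each edge `f ≠ e₀`, and `0` in the component at `e₀`. -/
def π1 (A : CoeffSys tl hd) (e₀ : E) :
    ((e' : {e : E // e ≠ e₀}) → A.edge e'.1) →+ ((e : E) → A.edge e) where
  toFun b := fun e => if he : e = e₀ then 0 else b ⟨e, he⟩
  map_zero' := by
    funext e
    by_cases he : e = e₀ <;> simp [he]
  map_add' x y := by
    funext e
    by_cases he : e = e₀ <;> simp [he]

end CoeffSys

namespace CoeffSys

variable {V E : Type} {tl hd : E → V}

/-- The inverse of the (bijective) head half-edge map at `e₀`, as a homomorphism. -/
noncomputable def invH (A : CoeffSys tl hd) (e₀ : E)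
    (hbij : Function.Bijective (A.mapH e₀)) : A.edge e₀ →+ A.vert (hd e₀) :=
  (AddEquiv.ofBijective (A.mapH e₀) hbij).symm.toAddMonoidHom

variable [DecidableEq V] [DecidableEq E]

/-- The analogue of `πV` for contracting the head vertex of `e₀` into the tail vertex. -/
def πVH (tl hd : E → V) (e₀ : E) (hne : tl e₀ ≠ hd e₀) (v : V) : {v : V // v ≠ hd e₀} :=
  ⟨if v = hd e₀ then tl e₀ else v, by
    split
    · exact fun hc => hne hc
    · assumption⟩

/-- The analogue of `contrHalf` for a redundant head half-edge. -/
noncomputable def contrHalfH (A : CoeffSys tl hd) (e₀ : E)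
    (hbij : Function.Bijective (A.mapH e₀)) {f : E} (v : V) (m : A.vert v →+ A.edge f) :
    A.vert (if v = hd e₀ then tl e₀ else v) →+ A.edge f :=
  if hv : v = hd e₀ then
    m.comp ((A.vcast hv.symm).toAddMonoidHom.comp
      ((-(A.invH e₀ hbij)).comp
        ((A.mapT e₀).comp (A.vcast (if_pos hv)).toAddMonoidHom)))
  else m.comp (A.vcast (if_neg hv)).toAddMonoidHom

/-- The contraction of the coefficient system `A` along the redundant head half-edge
of `e₀`. -/
noncomputable def contrSysH (A : CoeffSys tl hd) (e₀ : E) (hne : tl e₀ ≠ hd e₀)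
    (hbij : Function.Bijective (A.mapH e₀)) :
    CoeffSys (fun e' : {e : E // e ≠ e₀} => πVH tl hd e₀ hne (tl e'.1))
      (fun e' : {e : E // e ≠ e₀} => πVH tl hd e₀ hne (hd e'.1)) where
  vert v' := A.vert v'.1
  edge e' := A.edge e'.1
  mapT e' := A.contrHalfH e₀ hbij (tl e'.1) (A.mapT e'.1)
  mapH e' := A.contrHalfH e₀ hbij (hd e'.1) (A.mapH e'.1)

end CoeffSys

/-- A decorated graph: a finite directed multigraph together with a coefficient
system on it. -/
structure DecGraph where
  V : Type
  E : Type
  [fV : Fintype V]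
  [fE : Fintype E]
  tl : E → V
  hd : E → V
  A : CoeffSys tl hd

attribute [instance] DecGraph.fV DecGraph.fE

/-- Contraction of a decorated graph along a redundant tail half-edge. -/
noncomputable def DecGraph.contractT (G : DecGraph) (e₀ : G.E) (hne : G.tl e₀ ≠ G.hd e₀)
    (hbij : Function.Bijective (G.A.mapT e₀)) : DecGraph :=
  letI := Classical.decEq G.V
  letI := Classical.decEq G.E
  { V := {v : G.V // v ≠ G.tl e₀}
    E := {e : G.E // e ≠ e₀}
    tl := fun e' => CoeffSys.πV G.tl G.hd e₀ hne (G.tl e'.1)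
    hd := fun e' => CoeffSys.πV G.tl G.hd e₀ hne (G.hd e'.1)
    A := G.A.contrSys e₀ hne hbij }

/-- Contraction of a decorated graph along a redundant head half-edge. -/
noncomputable def DecGraph.contractH (G : DecGraph) (e₀ : G.E) (hne : G.tl e₀ ≠ G.hd e₀)
    (hbij : Function.Bijective (G.A.mapH e₀)) : DecGraph :=
  letI := Classical.decEq G.V
  letI := Classical.decEq G.E
  { V := {v : G.V // v ≠ G.hd e₀}
    E := {e : G.E // e ≠ e₀}
    tl := fun e' => CoeffSys.πVH G.tl G.hd e₀ hne (G.tl e'.1)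
    hd := fun e' => CoeffSys.πVH G.tl G.hd e₀ hne (G.hd e'.1)
    A := G.A.contrSysH e₀ hne hbij }

/-- One contraction step of decorated graphs: contracting along a redundant half-edge,
attached either to the tail or to the head of an edge whose endpoints are distinct. -/
inductive DecGraph.ContractStep : DecGraph → DecGraph → Prop
  | tail (G : DecGraph) (e₀ : G.E) (hne : G.tl e₀ ≠ G.hd e₀)
      (hbij : Function.Bijective (G.A.mapT e₀)) :
      ContractStep G (G.contractT e₀ hne hbij)
  | head (G : DecGraph) (e₀ : G.E) (hne : G.tl e₀ ≠ G.hd e₀)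
      (hbij : Function.Bijective (G.A.mapH e₀)) :
      ContractStep G (G.contractH e₀ hne hbij)

/-- The simple graph underlying a directed multigraph. -/
def graphOf {V E : Type} (tl hd : E → V) : SimpleGraph V where
  Adj u v := u ≠ v ∧ ∃ e, (tl e = u ∧ hd e = v) ∨ (tl e = v ∧ hd e = u)
  symm := by
    constructor
    rintro u v ⟨huv, e, he⟩
    exact ⟨huv.symm, e, he.symm⟩
  loopless := by
    constructor
    rintro v ⟨hv, -⟩
    exact hv rfl


namespace TreeContract

open SimpleGraph

lemma walk_lift {V V' : Type} {Gb : SimpleGraph V} {Gs : SimpleGraph V'} (φ : V → V')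
    (hφ : ∀ u v, Gb.Adj u v → Gs.Adj (φ u) (φ v) ∨ φ u = φ v) :
    ∀ {u v : V} (p : Gb.Walk u v), ∃ q : Gs.Walk (φ u) (φ v),
      ∀ x' ∈ q.support, ∃ x ∈ p.support, φ x = x' := by
  intro u v p
  induction p with
  | nil => exact ⟨SimpleGraph.Walk.nil, by simp⟩
  | @cons u b v h p ih =>
    obtain ⟨q, hq⟩ := ih
    rcases hφ _ _ h with hadj | heq
    · refine ⟨SimpleGraph.Walk.cons hadj q, ?_⟩
      intro x' hx'
      rw [SimpleGraph.Walk.support_cons] at hx'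
      rcases List.mem_cons.mp hx' with rfl | hx'
      · exact ⟨u, by simp, rfl⟩
      · obtain ⟨x, hx, hxx⟩ := hq x' hx'
        exact ⟨x, by simp [hx], hxx⟩
    · refine ⟨q.copy heq.symm rfl, ?_⟩
      intro x' hx'
      rw [SimpleGraph.Walk.support_copy] at hx'
      obtain ⟨x, hx, hxx⟩ := hq x' hx'
      exact ⟨x, by simp [hx], hxx⟩

lemma walk_start_neighbor {V : Type} {Gb : SimpleGraph V} {w z b : V}
    (hz : ∀ u, Gb.Adj w u → u = z) (r : Gb.Walk w b) (hb : w ≠ b) :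
    z ∈ r.support := by
  cases r with
  | nil => exact absurd rfl hb
  | @cons _ u _ h r' =>
    rw [SimpleGraph.Walk.support_cons]
    exact List.mem_cons.mpr (Or.inr (hz u h ▸ r'.start_mem_support))

lemma neighbor_mem_support {V : Type} {Gb : SimpleGraph V} {w z : V}
    (hz : ∀ u, Gb.Adj w u → u = z) {a b : V} (p : Gb.Walk a b)
    (hw : w ∈ p.support) (hb : w ≠ b) : z ∈ p.support := by
  classical
  exact p.support_dropUntil_subset hw (walk_start_neighbor hz (p.dropUntil w hw) hb)

lemma exists_leaf {V E : Type} [Fintype V] [Fintype E] (tl hd : E → V)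
    (hconn : (graphOf tl hd).Connected)
    (hcard : Fintype.card V = Fintype.card E + 1)
    (hE : 0 < Fintype.card E) (v₀ : V) :
    ∃ w, w ≠ v₀ ∧ ∃ e₀, (tl e₀ = w ∨ hd e₀ = w) ∧
      ∀ e, (tl e = w ∨ hd e = w) → e = e₀ := by
  classical
  set deg : V → ℕ := fun v => (Finset.univ.filter fun e => tl e = v).card +
    (Finset.univ.filter fun e => hd e = v).card with hdeg
  have hsum : ∑ v, deg v = 2 * Fintype.card E := by
    rw [hdeg, Finset.sum_add_distrib,
      ← Finset.card_eq_sum_card_fiberwise (f := tl) (t := Finset.univ)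
        (fun x _ => Finset.mem_univ (tl x)),
      ← Finset.card_eq_sum_card_fiberwise (f := hd) (t := Finset.univ)
        (fun x _ => Finset.mem_univ (hd x)),
      Finset.card_univ]
    ring
  have hone : ∀ v : V, 1 ≤ deg v := by
    intro v
    obtain ⟨u, hu⟩ := Fintype.exists_ne_of_one_lt_card (by omega) v
    obtain ⟨p⟩ := hconn v u
    cases p with
    | nil => exact absurd rfl hu
    | cons h p' =>
      obtain ⟨-, e, he⟩ := h
      have hmem : 1 ≤ (Finset.univ.filter fun e => tl e = v).card ∨
          1 ≤ (Finset.univ.filter fun e => hd e = v).card := by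
        rcases he with ⟨h1, -⟩ | ⟨-, h1⟩
        · exact Or.inl (Finset.card_pos.mpr ⟨e, by simp [h1]⟩)
        · exact Or.inr (Finset.card_pos.mpr ⟨e, by simp [h1]⟩)
      rw [hdeg]
      rcases hmem with h | h <;> simp <;> omega
  have hex : ∃ w, w ≠ v₀ ∧ deg w ≤ 1 := by
    by_contra hcon
    push_neg at hcon
    have hb : ∀ w ∈ Finset.univ.erase v₀, 2 ≤ deg w := fun w hw =>
      hcon w (Finset.ne_of_mem_erase hw)
    have hge := Finset.card_nsmul_le_sum (Finset.univ.erase v₀) deg 2 hb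
    rw [smul_eq_mul, Finset.card_erase_of_mem (Finset.mem_univ v₀), Finset.card_univ] at hge
    have hge' : (Fintype.card V - 1) * 2 ≤ ∑ x ∈ Finset.univ.erase v₀, deg x := hge
    have h1 := Finset.add_sum_erase Finset.univ deg (Finset.mem_univ v₀)
    have h2 := hone v₀
    omega
  obtain ⟨w, hwv, hw1⟩ := hex
  have hdw : (Finset.univ.filter fun e => tl e = w).card +
      (Finset.univ.filter fun e => hd e = w).card = 1 :=
    le_antisymm hw1 (hone w)
  set S : Finset E := Finset.univ.filter (fun e => tl e = w ∨ hd e = w) with hS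
  have hsub : S ⊆ (Finset.univ.filter fun e => tl e = w) ∪
      (Finset.univ.filter fun e => hd e = w) := by
    intro e he
    simp only [hS, Finset.mem_filter, Finset.mem_univ, true_and] at he
    rcases he with h | h
    · exact Finset.mem_union_left _ (by simp [h])
    · exact Finset.mem_union_right _ (by simp [h])
  have hScard : S.card ≤ 1 := by
    refine le_trans (Finset.card_le_card hsub) (le_trans (Finset.card_union_le _ _) ?_)
    omega
  have hSne : S.Nonempty := by
    have : 1 ≤ (Finset.univ.filter fun e => tl e = w).card ∨
        1 ≤ (Finset.univ.filter fun e => hd e = w).card := by omega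
    rcases this with h | h
    · obtain ⟨e, he⟩ := Finset.card_pos.mp h
      simp only [Finset.mem_filter, Finset.mem_univ, true_and] at he
      exact ⟨e, by simp [hS, he]⟩
    · obtain ⟨e, he⟩ := Finset.card_pos.mp h
      simp only [Finset.mem_filter, Finset.mem_univ, true_and] at he
      exact ⟨e, by simp [hS, he]⟩
  obtain ⟨e₀, he₀⟩ := hSne
  refine ⟨w, hwv, e₀, ?_, ?_⟩
  · simpa only [hS, Finset.mem_filter, Finset.mem_univ, true_and] using he₀
  · intro e he
    exact Finset.card_le_one.mp hScard e
      (by simp only [hS, Finset.mem_filter, Finset.mem_univ, true_and]; exact he) e₀ he₀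

lemma contrHalf_bijective {V E : Type} [DecidableEq V] {tl hd : E → V} (A : CoeffSys tl hd)
    (e₀ : E) (hbij : Function.Bijective (A.mapT e₀)) {f : E} (v : V)
    (m : A.vert v →+ A.edge f) (hv : ¬ v = tl e₀) (hm : Function.Bijective m) :
    Function.Bijective (A.contrHalf e₀ hbij v m) := by
  rw [CoeffSys.contrHalf, dif_neg hv, AddMonoidHom.coe_comp, AddEquiv.coe_toAddMonoidHom]
  exact hm.comp (A.vcast (if_neg hv)).bijective

lemma contrHalfH_bijective {V E : Type} [DecidableEq V] {tl hd : E → V} (A : CoeffSys tl hd)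
    (e₀ : E) (hbij : Function.Bijective (A.mapH e₀)) {f : E} (v : V)
    (m : A.vert v →+ A.edge f) (hv : ¬ v = hd e₀) (hm : Function.Bijective m) :
    Function.Bijective (A.contrHalfH e₀ hbij v m) := by
  rw [CoeffSys.contrHalfH, dif_neg hv, AddMonoidHom.coe_comp, AddEquiv.coe_toAddMonoidHom]
  exact hm.comp (A.vcast (if_neg hv)).bijective


lemma piV_ne {V E : Type} [DecidableEq V] (tl hd : E → V) (e₀ : E) (hne : tl e₀ ≠ hd e₀)
    {v : V} (h : v ≠ tl e₀) : CoeffSys.πV tl hd e₀ hne v = ⟨v, h⟩ :=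
  Subtype.ext (if_neg h)

lemma piV_eq {V E : Type} [DecidableEq V] (tl hd : E → V) (e₀ : E) (hne : tl e₀ ≠ hd e₀) :
    CoeffSys.πV tl hd e₀ hne (tl e₀) = ⟨hd e₀, Ne.symm hne⟩ :=
  Subtype.ext (if_pos rfl)

lemma piVH_ne {V E : Type} [DecidableEq V] (tl hd : E → V) (e₀ : E) (hne : tl e₀ ≠ hd e₀)
    {v : V} (h : v ≠ hd e₀) : CoeffSys.πVH tl hd e₀ hne v = ⟨v, h⟩ :=
  Subtype.ext (if_neg h)

lemma piVH_eq {V E : Type} [DecidableEq V] (tl hd : E → V) (e₀ : E) (hne : tl e₀ ≠ hd e₀) :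
    CoeffSys.πVH tl hd e₀ hne (hd e₀) = ⟨tl e₀, hne⟩ :=
  Subtype.ext (if_pos rfl)

lemma aux : ∀ (n : ℕ) (G : DecGraph), Fintype.card G.E = n →
    (∀ e : G.E, G.tl e ≠ G.hd e) →
    (graphOf G.tl G.hd).Connected →
    Fintype.card G.V = Fintype.card G.E + 1 →
    ∀ v₀ : G.V,
    (∀ e : G.E, (∀ p : (graphOf G.tl G.hd).Walk v₀ (G.tl e), p.IsPath → G.hd e ∈ p.support) →
      Function.Bijective (G.A.mapT e)) →
    (∀ e : G.E, (∀ p : (graphOf G.tl G.hd).Walk v₀ (G.hd e), p.IsPath → G.tl e ∈ p.support) →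
      Function.Bijective (G.A.mapH e)) →
    ∃ G' : DecGraph, Relation.ReflTransGen DecGraph.ContractStep G G' ∧
      Nonempty (Unique G'.V) ∧ IsEmpty G'.E := by
  intro n
  induction n with
  | zero =>
    intro G hn _ _ hcard _ _ _
    refine ⟨G, Relation.ReflTransGen.refl, ?_, Fintype.card_eq_zero_iff.mp hn⟩
    rw [← Fintype.card_eq_one_iff_nonempty_unique]
    omega
  | succ n ih =>
    intro G hn hloop hconn hcard v₀ hrT hrH
    letI : DecidableEq G.V := Classical.decEq G.V
    letI : DecidableEq G.E := Classical.decEq G.E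
    obtain ⟨w, hwv, e₀, hinc, huniq⟩ := exists_leaf G.tl G.hd hconn hcard (by omega) v₀
    rcases hinc with hA | hB
    · -- tail case: w = G.tl e₀
      subst hA
      have hne : G.tl e₀ ≠ G.hd e₀ := hloop e₀
      have hnotinc : ∀ e : G.E, e ≠ e₀ → G.tl e ≠ G.tl e₀ ∧ G.hd e ≠ G.tl e₀ :=
        fun e he => ⟨fun h => he (huniq e (Or.inl h)), fun h => he (huniq e (Or.inr h))⟩
      have hz : ∀ u, (graphOf G.tl G.hd).Adj (G.tl e₀) u → u = G.hd e₀ := by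
        rintro u ⟨hneu, e, ⟨h1, h2⟩ | ⟨h1, h2⟩⟩
        · have he := huniq e (Or.inl h1); subst he; exact h2.symm
        · have he := huniq e (Or.inr h2); subst he; exact absurd h1 hneu
      have hbij : Function.Bijective (G.A.mapT e₀) := by
        apply hrT e₀
        intro p _
        have hmem : G.hd e₀ ∈ p.reverse.support :=
          neighbor_mem_support hz p.reverse p.reverse.start_mem_support hwv
        rwa [SimpleGraph.Walk.support_reverse, List.mem_reverse] at hmem
      set G' := G.contractT e₀ hne hbij with hG'
      letI : DecidableEq G'.V := Classical.decEq _
      have hφadj : ∀ u v, (graphOf G.tl G.hd).Adj u v →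
          (graphOf G'.tl G'.hd).Adj (CoeffSys.πV G.tl G.hd e₀ hne u)
            (CoeffSys.πV G.tl G.hd e₀ hne v) ∨
          CoeffSys.πV G.tl G.hd e₀ hne u = CoeffSys.πV G.tl G.hd e₀ hne v := by
        rintro u v ⟨huv, e, he⟩
        by_cases heq : e = e₀
        · subst heq
          right
          rcases he with ⟨h1, h2⟩ | ⟨h1, h2⟩
          · subst h1; subst h2
            exact (piV_eq G.tl G.hd e hne).trans
              (piV_ne G.tl G.hd e hne (Ne.symm hne)).symm
          · subst h1; subst h2
            exact (piV_ne G.tl G.hd e hne (Ne.symm hne)).trans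
              (piV_eq G.tl G.hd e hne).symm
        · left
          obtain ⟨ht, hh⟩ := hnotinc e heq
          rcases he with ⟨h1, h2⟩ | ⟨h1, h2⟩
          · subst h1; subst h2
            refine ⟨?_, ⟨e, heq⟩, Or.inl ⟨rfl, rfl⟩⟩
            rw [piV_ne G.tl G.hd e₀ hne ht, piV_ne G.tl G.hd e₀ hne hh]
            exact fun hc => huv (congrArg Subtype.val hc)
          · subst h1; subst h2
            refine ⟨?_, ⟨e, heq⟩, Or.inr ⟨rfl, rfl⟩⟩
            rw [piV_ne G.tl G.hd e₀ hne hh, piV_ne G.tl G.hd e₀ hne ht]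
            exact fun hc => huv (congrArg Subtype.val hc)
      have hloop' : ∀ e' : G'.E, G'.tl e' ≠ G'.hd e' := by
        intro e'
        obtain ⟨ht, hh⟩ := hnotinc e'.1 e'.2
        show CoeffSys.πV G.tl G.hd e₀ hne (G.tl e'.1) ≠
          CoeffSys.πV G.tl G.hd e₀ hne (G.hd e'.1)
        rw [piV_ne G.tl G.hd e₀ hne ht, piV_ne G.tl G.hd e₀ hne hh]
        exact fun hc => hloop e'.1 (congrArg Subtype.val hc)
      have hconn' : (graphOf G'.tl G'.hd).Connected := by
        haveI hnon : Nonempty G'.V := ⟨⟨G.hd e₀, Ne.symm hne⟩⟩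
        refine ⟨fun u' v' => ?_⟩
        obtain ⟨p⟩ := hconn u'.1 v'.1
        obtain ⟨q, -⟩ := walk_lift (Gs := graphOf G'.tl G'.hd)
          (CoeffSys.πV G.tl G.hd e₀ hne) hφadj p
        exact ⟨q.copy (piV_ne G.tl G.hd e₀ hne u'.2) (piV_ne G.tl G.hd e₀ hne v'.2)⟩
      have hcV : Fintype.card G'.V = Fintype.card G.V - 1 := by
        have h : Fintype.card {v : G.V // ¬ v = G.tl e₀} = Fintype.card G.V - 1 := by
          rw [Fintype.card_subtype_compl, Fintype.card_subtype_eq]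
        exact (Fintype.card_congr (Equiv.refl _)).trans h
      have hcE : Fintype.card G'.E = Fintype.card G.E - 1 := by
        have h : Fintype.card {e : G.E // ¬ e = e₀} = Fintype.card G.E - 1 := by
          rw [Fintype.card_subtype_compl, Fintype.card_subtype_eq]
        exact (Fintype.card_congr (Equiv.refl _)).trans h
      have hcard' : Fintype.card G'.V = Fintype.card G'.E + 1 := by omega
      have hn' : Fintype.card G'.E = n := by omega
      set v₀' : G'.V := ⟨v₀, Ne.symm hwv⟩ with hv₀'
      have hrT' : ∀ e' : G'.E,
          (∀ q : (graphOf G'.tl G'.hd).Walk v₀' (G'.tl e'), q.IsPath →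
            G'.hd e' ∈ q.support) → Function.Bijective (G'.A.mapT e') := by
        intro e' H
        obtain ⟨ht, hh⟩ := hnotinc e'.1 e'.2
        have hb : Function.Bijective (G.A.mapT e'.1) := by
          apply hrT e'.1
          intro p _
          obtain ⟨q, hq⟩ := walk_lift (Gs := graphOf G'.tl G'.hd)
            (CoeffSys.πV G.tl G.hd e₀ hne) hφadj p
          have h1 : CoeffSys.πV G.tl G.hd e₀ hne v₀ = v₀' :=
            piV_ne G.tl G.hd e₀ hne (Ne.symm hwv)
          have h2 : CoeffSys.πV G.tl G.hd e₀ hne (G.tl e'.1) = G'.tl e' := rfl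
          have hmem' := H ((q.copy h1 h2).bypass) ((q.copy h1 h2).bypass_isPath)
          have hmem : G'.hd e' ∈ q.support := by
            have hs := SimpleGraph.Walk.support_bypass_subset _ hmem'
            rw [← SimpleGraph.Walk.support_copy q h1 h2]
            exact hs
          obtain ⟨x, hx, hxx⟩ := hq _ hmem
          have h4 : G'.hd e' = ⟨G.hd e'.1, hh⟩ := piV_ne G.tl G.hd e₀ hne hh
          by_cases hxw : x = G.tl e₀
          · subst hxw
            rw [piV_eq, h4] at hxx
            have h5 : G.hd e₀ = G.hd e'.1 := congrArg Subtype.val hxx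
            rw [← h5]
            exact neighbor_mem_support hz p hx (Ne.symm ht)
          · rw [piV_ne G.tl G.hd e₀ hne hxw, h4] at hxx
            have h5 : x = G.hd e'.1 := congrArg Subtype.val hxx
            rw [← h5]
            exact hx
        show Function.Bijective (G.A.contrHalf e₀ hbij (G.tl e'.1) (G.A.mapT e'.1))
        exact contrHalf_bijective _ _ _ _ _ ht hb
      have hrH' : ∀ e' : G'.E,
          (∀ q : (graphOf G'.tl G'.hd).Walk v₀' (G'.hd e'), q.IsPath →
            G'.tl e' ∈ q.support) → Function.Bijective (G'.A.mapH e') := by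
        intro e' H
        obtain ⟨ht, hh⟩ := hnotinc e'.1 e'.2
        have hb : Function.Bijective (G.A.mapH e'.1) := by
          apply hrH e'.1
          intro p _
          obtain ⟨q, hq⟩ := walk_lift (Gs := graphOf G'.tl G'.hd)
            (CoeffSys.πV G.tl G.hd e₀ hne) hφadj p
          have h1 : CoeffSys.πV G.tl G.hd e₀ hne v₀ = v₀' :=
            piV_ne G.tl G.hd e₀ hne (Ne.symm hwv)
          have h2 : CoeffSys.πV G.tl G.hd e₀ hne (G.hd e'.1) = G'.hd e' := rfl
          have hmem' := H ((q.copy h1 h2).bypass) ((q.copy h1 h2).bypass_isPath)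
          have hmem : G'.tl e' ∈ q.support := by
            have hs := SimpleGraph.Walk.support_bypass_subset _ hmem'
            rw [← SimpleGraph.Walk.support_copy q h1 h2]
            exact hs
          obtain ⟨x, hx, hxx⟩ := hq _ hmem
          have h4 : G'.tl e' = ⟨G.tl e'.1, ht⟩ := piV_ne G.tl G.hd e₀ hne ht
          by_cases hxw : x = G.tl e₀
          · subst hxw
            rw [piV_eq, h4] at hxx
            have h5 : G.hd e₀ = G.tl e'.1 := congrArg Subtype.val hxx
            rw [← h5]
            exact neighbor_mem_support hz p hx (Ne.symm hh)
          · rw [piV_ne G.tl G.hd e₀ hne hxw, h4] at hxx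
            have h5 : x = G.tl e'.1 := congrArg Subtype.val hxx
            rw [← h5]
            exact hx
        show Function.Bijective (G.A.contrHalf e₀ hbij (G.hd e'.1) (G.A.mapH e'.1))
        exact contrHalf_bijective _ _ _ _ _ hh hb
      obtain ⟨G'', hst, hu, hem⟩ := ih G' hn' hloop' hconn' hcard' v₀' hrT' hrH'
      refine ⟨G'', Relation.ReflTransGen.head ?_ hst, hu, hem⟩
      rw [hG']
      exact DecGraph.ContractStep.tail G e₀ hne hbij
    · -- head case: w = G.hd e₀
      subst hB
      have hne : G.tl e₀ ≠ G.hd e₀ := hloop e₀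
      have hnotinc : ∀ e : G.E, e ≠ e₀ → G.tl e ≠ G.hd e₀ ∧ G.hd e ≠ G.hd e₀ :=
        fun e he => ⟨fun h => he (huniq e (Or.inl h)), fun h => he (huniq e (Or.inr h))⟩
      have hz : ∀ u, (graphOf G.tl G.hd).Adj (G.hd e₀) u → u = G.tl e₀ := by
        rintro u ⟨hneu, e, ⟨h1, h2⟩ | ⟨h1, h2⟩⟩
        · have he := huniq e (Or.inl h1); subst he; exact absurd h2 hneu
        · have he := huniq e (Or.inr h2); subst he; exact h1.symm
      have hbij : Function.Bijective (G.A.mapH e₀) := by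
        apply hrH e₀
        intro p _
        have hmem : G.tl e₀ ∈ p.reverse.support :=
          neighbor_mem_support hz p.reverse p.reverse.start_mem_support hwv
        rwa [SimpleGraph.Walk.support_reverse, List.mem_reverse] at hmem
      set G' := G.contractH e₀ hne hbij with hG'
      letI : DecidableEq G'.V := Classical.decEq _
      have hφadj : ∀ u v, (graphOf G.tl G.hd).Adj u v →
          (graphOf G'.tl G'.hd).Adj (CoeffSys.πVH G.tl G.hd e₀ hne u)
            (CoeffSys.πVH G.tl G.hd e₀ hne v) ∨
          CoeffSys.πVH G.tl G.hd e₀ hne u = CoeffSys.πVH G.tl G.hd e₀ hne v := by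
        rintro u v ⟨huv, e, he⟩
        by_cases heq : e = e₀
        · subst heq
          right
          rcases he with ⟨h1, h2⟩ | ⟨h1, h2⟩
          · subst h1; subst h2
            exact (piVH_ne G.tl G.hd e hne hne).trans
              (piVH_eq G.tl G.hd e hne).symm
          · subst h1; subst h2
            exact (piVH_eq G.tl G.hd e hne).trans
              (piVH_ne G.tl G.hd e hne hne).symm
        · left
          obtain ⟨ht, hh⟩ := hnotinc e heq
          rcases he with ⟨h1, h2⟩ | ⟨h1, h2⟩
          · subst h1; subst h2
            refine ⟨?_, ⟨e, heq⟩, Or.inl ⟨rfl, rfl⟩⟩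
            rw [piVH_ne G.tl G.hd e₀ hne ht, piVH_ne G.tl G.hd e₀ hne hh]
            exact fun hc => huv (congrArg Subtype.val hc)
          · subst h1; subst h2
            refine ⟨?_, ⟨e, heq⟩, Or.inr ⟨rfl, rfl⟩⟩
            rw [piVH_ne G.tl G.hd e₀ hne hh, piVH_ne G.tl G.hd e₀ hne ht]
            exact fun hc => huv (congrArg Subtype.val hc)
      have hloop' : ∀ e' : G'.E, G'.tl e' ≠ G'.hd e' := by
        intro e'
        obtain ⟨ht, hh⟩ := hnotinc e'.1 e'.2
        show CoeffSys.πVH G.tl G.hd e₀ hne (G.tl e'.1) ≠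
          CoeffSys.πVH G.tl G.hd e₀ hne (G.hd e'.1)
        rw [piVH_ne G.tl G.hd e₀ hne ht, piVH_ne G.tl G.hd e₀ hne hh]
        exact fun hc => hloop e'.1 (congrArg Subtype.val hc)
      have hconn' : (graphOf G'.tl G'.hd).Connected := by
        haveI hnon : Nonempty G'.V := ⟨⟨G.tl e₀, hne⟩⟩
        refine ⟨fun u' v' => ?_⟩
        obtain ⟨p⟩ := hconn u'.1 v'.1
        obtain ⟨q, -⟩ := walk_lift (Gs := graphOf G'.tl G'.hd)
          (CoeffSys.πVH G.tl G.hd e₀ hne) hφadj p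
        exact ⟨q.copy (piVH_ne G.tl G.hd e₀ hne u'.2) (piVH_ne G.tl G.hd e₀ hne v'.2)⟩
      have hcV : Fintype.card G'.V = Fintype.card G.V - 1 := by
        have h : Fintype.card {v : G.V // ¬ v = G.hd e₀} = Fintype.card G.V - 1 := by
          rw [Fintype.card_subtype_compl, Fintype.card_subtype_eq]
        exact (Fintype.card_congr (Equiv.refl _)).trans h
      have hcE : Fintype.card G'.E = Fintype.card G.E - 1 := by
        have h : Fintype.card {e : G.E // ¬ e = e₀} = Fintype.card G.E - 1 := by
          rw [Fintype.card_subtype_compl, Fintype.card_subtype_eq]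
        exact (Fintype.card_congr (Equiv.refl _)).trans h
      have hcard' : Fintype.card G'.V = Fintype.card G'.E + 1 := by omega
      have hn' : Fintype.card G'.E = n := by omega
      set v₀' : G'.V := ⟨v₀, Ne.symm hwv⟩ with hv₀'
      have hrT' : ∀ e' : G'.E,
          (∀ q : (graphOf G'.tl G'.hd).Walk v₀' (G'.tl e'), q.IsPath →
            G'.hd e' ∈ q.support) → Function.Bijective (G'.A.mapT e') := by
        intro e' H
        obtain ⟨ht, hh⟩ := hnotinc e'.1 e'.2
        have hb : Function.Bijective (G.A.mapT e'.1) := by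
          apply hrT e'.1
          intro p _
          obtain ⟨q, hq⟩ := walk_lift (Gs := graphOf G'.tl G'.hd)
            (CoeffSys.πVH G.tl G.hd e₀ hne) hφadj p
          have h1 : CoeffSys.πVH G.tl G.hd e₀ hne v₀ = v₀' :=
            piVH_ne G.tl G.hd e₀ hne (Ne.symm hwv)
          have h2 : CoeffSys.πVH G.tl G.hd e₀ hne (G.tl e'.1) = G'.tl e' := rfl
          have hmem' := H ((q.copy h1 h2).bypass) ((q.copy h1 h2).bypass_isPath)
          have hmem : G'.hd e' ∈ q.support := by
            have hs := SimpleGraph.Walk.support_bypass_subset _ hmem'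
            rw [← SimpleGraph.Walk.support_copy q h1 h2]
            exact hs
          obtain ⟨x, hx, hxx⟩ := hq _ hmem
          have h4 : G'.hd e' = ⟨G.hd e'.1, hh⟩ := piVH_ne G.tl G.hd e₀ hne hh
          by_cases hxw : x = G.hd e₀
          · subst hxw
            rw [piVH_eq, h4] at hxx
            have h5 : G.tl e₀ = G.hd e'.1 := congrArg Subtype.val hxx
            rw [← h5]
            exact neighbor_mem_support hz p hx (Ne.symm ht)
          · rw [piVH_ne G.tl G.hd e₀ hne hxw, h4] at hxx
            have h5 : x = G.hd e'.1 := congrArg Subtype.val hxx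
            rw [← h5]
            exact hx
        show Function.Bijective (G.A.contrHalfH e₀ hbij (G.tl e'.1) (G.A.mapT e'.1))
        exact contrHalfH_bijective _ _ _ _ _ ht hb
      have hrH' : ∀ e' : G'.E,
          (∀ q : (graphOf G'.tl G'.hd).Walk v₀' (G'.hd e'), q.IsPath →
            G'.tl e' ∈ q.support) → Function.Bijective (G'.A.mapH e') := by
        intro e' H
        obtain ⟨ht, hh⟩ := hnotinc e'.1 e'.2
        have hb : Function.Bijective (G.A.mapH e'.1) := by
          apply hrH e'.1
          intro p _
          obtain ⟨q, hq⟩ := walk_lift (Gs := graphOf G'.tl G'.hd)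
            (CoeffSys.πVH G.tl G.hd e₀ hne) hφadj p
          have h1 : CoeffSys.πVH G.tl G.hd e₀ hne v₀ = v₀' :=
            piVH_ne G.tl G.hd e₀ hne (Ne.symm hwv)
          have h2 : CoeffSys.πVH G.tl G.hd e₀ hne (G.hd e'.1) = G'.hd e' := rfl
          have hmem' := H ((q.copy h1 h2).bypass) ((q.copy h1 h2).bypass_isPath)
          have hmem : G'.tl e' ∈ q.support := by
            have hs := SimpleGraph.Walk.support_bypass_subset _ hmem'
            rw [← SimpleGraph.Walk.support_copy q h1 h2]
            exact hs
          obtain ⟨x, hx, hxx⟩ := hq _ hmem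
          have h4 : G'.tl e' = ⟨G.tl e'.1, ht⟩ := piVH_ne G.tl G.hd e₀ hne ht
          by_cases hxw : x = G.hd e₀
          · subst hxw
            rw [piVH_eq, h4] at hxx
            have h5 : G.tl e₀ = G.tl e'.1 := congrArg Subtype.val hxx
            rw [← h5]
            exact neighbor_mem_support hz p hx (Ne.symm hh)
          · rw [piVH_ne G.tl G.hd e₀ hne hxw, h4] at hxx
            have h5 : x = G.tl e'.1 := congrArg Subtype.val hxx
            rw [← h5]
            exact hx
        show Function.Bijective (G.A.contrHalfH e₀ hbij (G.hd e'.1) (G.A.mapH e'.1))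
        exact contrHalfH_bijective _ _ _ _ _ hh hb
      obtain ⟨G'', hst, hu, hem⟩ := ih G' hn' hloop' hconn' hcard' v₀' hrT' hrH'
      refine ⟨G'', Relation.ReflTransGen.head ?_ hst, hu, hem⟩
      rw [hG']
      exact DecGraph.ContractStep.head G e₀ hne hbij

end TreeContract
/-- A decorated graph whose underlying graph is a finite tree, with a
root `v₀` such that the half-edge map attached to the child of each edge is an
isomorphism, can be contracted to a point (a single vertex and no edges) by a finite
sequence of contractions along redundant half-edges. -/
theorem tree_contracts_to_point (G : DecGraph)
    (hloop : ∀ e : G.E, G.tl e ≠ G.hd e)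
    (hconn : (graphOf G.tl G.hd).Connected)
    (hcard : Fintype.card G.V = Fintype.card G.E + 1)
    (v₀ : G.V)
    (hrootT : ∀ e : G.E,
      (∀ p : (graphOf G.tl G.hd).Walk v₀ (G.tl e), p.IsPath → G.hd e ∈ p.support) →
      Function.Bijective (G.A.mapT e))
    (hrootH : ∀ e : G.E,
      (∀ p : (graphOf G.tl G.hd).Walk v₀ (G.hd e), p.IsPath → G.tl e ∈ p.support) →
      Function.Bijective (G.A.mapH e)) :
    ∃ G' : DecGraph, Relation.ReflTransGen DecGraph.ContractStep G G' ∧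
      Nonempty (Unique G'.V) ∧ IsEmpty G'.E := by
  exact TreeContract.aux (Fintype.card G.E) G rfl hloop hconn hcard v₀ hrootT hrootH
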